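/- Let m ≥ 0 and z ≥ 0 be integers. Then (x − y)^{2m+1} divides the polynomial Σ_{i=0}^m C(m−z, i)·C(m+z, m−i)·(x^{i+z}·y^{m−i} − x^{m−i}·y^{i+z}) in ℚ[x,y], where the generalized binomial coefficients are evaluated at the (possibly negative) integers m−z and m+z. -/
import Mathlib

open MvPolynomial

/-- The generalized binomial coefficient `C(w, j) = w(w−1)⋯(w−j+1)/j!` over `ℚ`. -/
def genChooseQ (w : ℚ) (j : ℕ) : ℚ :=
  (∏ k ∈ Finset.range j, (w - k)) / (j.factorial : ℚ)

namespace GCQ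

lemma zero_right (w : ℚ) : genChooseQ w 0 = 1 := by simp [genChooseQ]

lemma succ (w : ℚ) (j : ℕ) :
    genChooseQ w (j+1) = genChooseQ w j * (w - j) / (j+1) := by
  rw [genChooseQ, genChooseQ, Finset.prod_range_succ, Nat.factorial_succ,
    div_mul_eq_mul_div, div_div]
  push_cast
  rw [mul_comm ((j:ℚ)+1)]

lemma gcq_nat (n j : ℕ) : genChooseQ (n : ℚ) j = (n.choose j : ℚ) := by
  induction j with
  | zero => simp [zero_right]
  | succ j ih =>
    rw [succ, ih]
    rcases lt_or_ge j n with h | h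
    · have h1 : (j:ℚ) + 1 ≠ 0 := by positivity
      have := Nat.choose_succ_right_eq n j
      have hle : j ≤ n := le_of_lt h
      have hc : ((n.choose (j+1) : ℕ) : ℚ) * ((j:ℚ)+1) = (n.choose j : ℚ) * ((n : ℚ) - j) := by
        calc ((n.choose (j+1) : ℕ) : ℚ) * ((j:ℚ)+1)
            = ((n.choose (j+1) * (j+1) : ℕ) : ℚ) := by push_cast; ring
          _ = ((n.choose j * (n - j) : ℕ) : ℚ) := by rw [this]
          _ = (n.choose j : ℚ) * ((n : ℚ) - j) := by push_cast [hle]; ring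
      field_simp
      linarith [hc]
    · rcases eq_or_lt_of_le h with rfl | h2
      · simp [Nat.choose_self, Nat.choose_succ_self]
      · simp [Nat.choose_eq_zero_of_lt h2, Nat.choose_eq_zero_of_lt (Nat.lt_succ_of_lt h2)]

lemma gcq_nat_zero {n j : ℕ} (h : n < j) : genChooseQ (n : ℚ) j = 0 := by
  rw [gcq_nat, Nat.choose_eq_zero_of_lt h, Nat.cast_zero]

lemma reflect (a : ℚ) (k : ℕ) :
    genChooseQ a k = (-1)^k * genChooseQ ((k:ℚ) - 1 - a) k := by
  unfold genChooseQ
  rw [← Finset.prod_range_reflect (fun r => a - r) k]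
  have h : ∀ j ∈ Finset.range k, a - ((k - 1 - j : ℕ) : ℚ) = -1 * (((k:ℚ) - 1 - a) - j) := by
    intro j hj
    have hj' : j ≤ k - 1 := by have := Finset.mem_range.mp hj; omega
    have hk : 1 ≤ k := by have := Finset.mem_range.mp hj; omega
    have : ((k - 1 - j : ℕ) : ℚ) = (k:ℚ) - 1 - j := by push_cast [hj', hk]; ring
    rw [this]; ring
  rw [Finset.prod_congr rfl h, Finset.prod_mul_distrib, Finset.prod_const, Finset.card_range]
  ring

lemma mul_shift (w : ℚ) (a b : ℕ) :
    genChooseQ w a * genChooseQ (w - a) b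
      = genChooseQ w (a+b) * ((a+b).choose a : ℚ) := by
  unfold genChooseQ
  have hsplit : ∏ r ∈ Finset.range (a+b), (w - r)
      = (∏ r ∈ Finset.range a, (w - r)) * ∏ r ∈ Finset.range b, (w - a - r) := by
    rw [Finset.prod_range_add]
    congr 1
    apply Finset.prod_congr rfl
    intro r _; push_cast; ring
  rw [hsplit]
  have key2 : (a+b).choose a * a.factorial * b.factorial = (a+b).factorial := by
    have := Nat.add_choose_mul_factorial_mul_factorial b a
    rw [Nat.add_comm b a] at this
    linarith [this]
  have hfac : ((a+b).choose a : ℚ) * ((a.factorial : ℚ) * (b.factorial : ℚ)) = ((a+b).factorial : ℚ) := by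
    exact_mod_cast congrArg (fun n : ℕ => (n : ℚ)) (by linarith [key2] : (a+b).choose a * (a.factorial * b.factorial) = (a+b).factorial)
  have h1 : (a.factorial : ℚ) ≠ 0 := by positivity
  have h2 : (b.factorial : ℚ) ≠ 0 := by positivity
  have h3 : ((a+b).factorial : ℚ) ≠ 0 := by positivity
  rw [div_mul_div_comm, div_mul_eq_mul_div, div_eq_div_iff (by positivity) h3]
  rw [← hfac]
  ring

lemma absorb (w : ℚ) (M : ℕ) :
    ((M:ℚ)+1) * genChooseQ w (M+1) = w * genChooseQ (w-1) M := by
  unfold genChooseQ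
  rw [Finset.prod_range_succ' (fun r => w - r) M]
  have h : ∀ r ∈ Finset.range M, w - ((r+1 : ℕ):ℚ) = (w - 1) - r := by
    intro r _; push_cast; ring
  rw [Finset.prod_congr rfl h, Nat.factorial_succ]
  have h1 : (M.factorial : ℚ) ≠ 0 := by positivity
  have h2 : ((M:ℚ)+1) ≠ 0 := by positivity
  push_cast
  field_simp
  ring



lemma vandermonde (M : ℕ) (a b : ℚ) :
    ∑ i ∈ Finset.range (M+1), genChooseQ a i * genChooseQ b (M-i)
      = genChooseQ (a+b) M := by
  induction M generalizing a b with
  | zero => simp [zero_right]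
  | succ M ih =>
    have hM : ((M:ℚ)+1) ≠ 0 := by positivity
    apply mul_left_cancel₀ hM
    have key : ((M:ℚ)+1) * ∑ i ∈ Finset.range (M+2), genChooseQ a i * genChooseQ b (M+1-i)
        = a * genChooseQ (a-1+b) M + b * genChooseQ (a+b-1) M := by
      rw [Finset.mul_sum]
      have hsplit : ∀ i ∈ Finset.range (M+2),
          ((M:ℚ)+1) * (genChooseQ a i * genChooseQ b (M+1-i))
            = ((i:ℚ) * genChooseQ a i) * genChooseQ b (M+1-i)
              + genChooseQ a i * (((M+1-i : ℕ):ℚ) * genChooseQ b (M+1-i)) := by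
        intro i hi
        have hi' : i ≤ M+1 := by have := Finset.mem_range.mp hi; omega
        have : ((M+1-i : ℕ):ℚ) = (M:ℚ)+1-i := by push_cast [hi']; ring
        rw [this]; ring
      rw [Finset.sum_congr rfl hsplit, Finset.sum_add_distrib]
      congr 1
      · rw [Finset.sum_range_succ' (fun i => ((i:ℚ) * genChooseQ a i) * genChooseQ b (M+1-i)) (M+1)]
        simp only [Nat.cast_zero, zero_mul, mul_zero, add_zero, zero_add]
        have h : ∀ i ∈ Finset.range (M+1),
            (((i+1 : ℕ):ℚ) * genChooseQ a (i+1)) * genChooseQ b (M+1-(i+1))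
              = a * (genChooseQ (a-1) i * genChooseQ b (M-i)) := by
          intro i hi
          have h1 : (((i:ℕ):ℚ)+1) * genChooseQ a (i+1) = a * genChooseQ (a-1) i := absorb a i
          have h2 : M+1-(i+1) = M-i := by omega
          rw [h2]
          push_cast
          rw [h1]
          ring
        rw [Finset.sum_congr rfl h, ← Finset.mul_sum, ih]
      · rw [Finset.sum_range_succ]
        simp only [Nat.sub_self, Nat.cast_zero, zero_mul, mul_zero, add_zero]
        have h : ∀ i ∈ Finset.range (M+1),
            genChooseQ a i * (((M+1-i : ℕ):ℚ) * genChooseQ b (M+1-i))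
              = b * (genChooseQ a i * genChooseQ (b-1) (M-i)) := by
          intro i hi
          have h2 : M+1-i = (M-i)+1 := by have := Finset.mem_range.mp hi; omega
          have h3 : (((M-i : ℕ):ℚ)+1) * genChooseQ b ((M-i)+1) = b * genChooseQ (b-1) (M-i) :=
            absorb b (M-i)
          rw [h2]
          have h4 : ((M-i+1 : ℕ):ℚ) = ((M-i:ℕ):ℚ)+1 := by push_cast; ring
          rw [h4, h3]
          ring
        rw [Finset.sum_congr rfl h, ← Finset.mul_sum, ih]
        have harg : a + (b-1) = a + b - 1 := by ring
        rw [harg]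
    rw [key]
    have h5 : ((M:ℚ)+1) * genChooseQ (a+b) (M+1) = (a+b) * genChooseQ (a+b-1) M := absorb (a+b) M
    rw [h5]
    have h6 : a - 1 + b = a + b - 1 := by ring
    rw [h6]
    ring

lemma newton (k : ℕ) : ∀ m i : ℕ, i ≤ m + k →
    ((m + k - i).choose k : ℚ)
      = ∑ j ∈ Finset.range (k+1), (-1:ℚ)^j * ((m + k - j).choose (k-j) : ℚ) * (i.choose j : ℚ) := by
  induction k with
  | zero => intro m i hi; simp
  | succ k ihk =>
    intro m i
    induction i with
    | zero =>
      intro _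
      rw [Finset.sum_eq_single 0]
      · simp
      · intro j hj hj0
        have : (0:ℕ).choose j = 0 := Nat.choose_eq_zero_of_lt (by omega)
        simp [this]
      · intro h; simp at h
    | succ i ihi =>
      intro hi
      have hi' : i ≤ m + (k+1) := by omega
      have hik : i ≤ m + k := by omega
      have hihi := ihi hi'
      rw [Finset.sum_range_succ' (fun j => (-1:ℚ)^j * ((m + (k+1) - j).choose (k+1-j) : ℚ) * ((i+1).choose j : ℚ)) (k+1)]
      rw [Finset.sum_range_succ' (fun j => (-1:ℚ)^j * ((m + (k+1) - j).choose (k+1-j) : ℚ) * ((i).choose j : ℚ)) (k+1)] at hihi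
      have expand : ∀ j ∈ Finset.range (k+1),
          (-1:ℚ)^(j+1) * ((m + (k+1) - (j+1)).choose (k+1-(j+1)) : ℚ) * ((i+1).choose (j+1) : ℚ)
            = (-1:ℚ)^(j+1) * ((m + (k+1) - (j+1)).choose (k+1-(j+1)) : ℚ) * ((i).choose (j+1) : ℚ)
              + (-((-1:ℚ)^j * ((m + k - j).choose (k-j) : ℚ) * ((i).choose j : ℚ))) := by
        intro j hj
        have e1 : m + (k+1) - (j+1) = m + k - j := by omega
        have e2 : k+1-(j+1) = k-j := by omega
        have e3 : (i+1).choose (j+1) = i.choose j + i.choose (j+1) := Nat.choose_succ_succ i j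
        rw [e1, e2, e3]
        push_cast
        ring
      rw [Finset.sum_congr rfl expand, Finset.sum_add_distrib]
      have sum2 : ∑ j ∈ Finset.range (k+1), (-((-1:ℚ)^j * ((m + k - j).choose (k-j) : ℚ) * ((i).choose j : ℚ)))
          = -((m + k - i).choose k : ℚ) := by
        rw [Finset.sum_neg_distrib, ← ihk m i hik]
      rw [sum2]
      have pascal : ((m+k+1-i).choose (k+1) : ℕ) = (m+k-i).choose (k+1) + (m+k-i).choose k := by
        have e : m+k+1-i = (m+k-i)+1 := by omega
        rw [e, Nat.choose_succ_succ']
        omega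
      have lhs_eq : m + (k+1) - (i+1) = m+k-i := by omega
      have hihi_eq : m + (k+1) - i = m+k+1-i := by omega
      rw [lhs_eq]
      rw [hihi_eq] at hihi
      simp only [Nat.choose_zero_right, Nat.cast_one, mul_one, pow_zero, one_mul, Nat.sub_zero] at hihi ⊢
      have : ((m+k+1-i).choose (k+1) : ℚ) = ((m+k-i).choose (k+1) : ℚ) + ((m+k-i).choose k : ℚ) := by
        exact_mod_cast congrArg (fun n : ℕ => (n:ℚ)) pascal
      linarith [hihi, this]
/-- Closed form for the right-hand sum. -/
lemma Rclosed (m z k : ℕ) (hk2 : k ≤ 2*m) :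
    ∑ i ∈ Finset.range (m+1),
        genChooseQ ((m:ℚ)-z) i * genChooseQ ((m:ℚ)+z) (m-i) * (((m-i).choose k : ℕ) : ℚ)
      = (((2*m-k).choose m : ℕ) : ℚ) * genChooseQ ((m:ℚ)+z) k := by
  rcases le_or_gt k m with hk | hk
  · -- restrict to i ≤ m-k
    rw [← Finset.sum_subset (Finset.range_subset_range.mpr (by omega : m-k+1 ≤ m+1))]
    · have step : ∀ i ∈ Finset.range (m-k+1),
          genChooseQ ((m:ℚ)-z) i * genChooseQ ((m:ℚ)+z) (m-i) * (((m-i).choose k : ℕ) : ℚ)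
            = genChooseQ ((m:ℚ)+z) k *
                (genChooseQ ((m:ℚ)-z) i * genChooseQ ((m:ℚ)+z-k) ((m-k)-i)) := by
        intro i hi
        have hi' : i ≤ m-k := by have := Finset.mem_range.mp hi; omega
        have h1 : k + ((m-i)-k) = m-i := by omega
        have h2 : ((m:ℚ)+z) - (k:ℚ) = ((m:ℚ)+z) - (k:ℕ) := by norm_num
        have key := mul_shift ((m:ℚ)+z) k ((m-i)-k)
        rw [h1] at key
        have h3 : (m-k)-i = (m-i)-k := by omega
        rw [h3]
        linear_combination (-(genChooseQ ((m:ℚ)-z) i)) * key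
      rw [Finset.sum_congr rfl step, ← Finset.mul_sum]
      have hv := vandermonde (m-k) ((m:ℚ)-z) ((m:ℚ)+z-k)
      rw [hv]
      have harg : ((m:ℚ)-z) + ((m:ℚ)+z-k) = ((2*m-k : ℕ) : ℚ) := by
        push_cast [show k ≤ 2*m by omega]; ring
      rw [harg, gcq_nat]
      have hsym : (2*m-k).choose (m-k) = (2*m-k).choose m := by
        rw [← Nat.choose_symm (by omega : m ≤ 2*m-k)]
        congr 1
        omega
      rw [hsym]
      ring
    · intro i hi hni
      have h1 : m - i < k := by
        simp only [Finset.mem_range] at hi hni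
        omega
      rw [Nat.choose_eq_zero_of_lt h1]
      simp
  · -- k > m : both sides vanish
    have h0 : ∀ i ∈ Finset.range (m+1),
        genChooseQ ((m:ℚ)-z) i * genChooseQ ((m:ℚ)+z) (m-i) * (((m-i).choose k : ℕ) : ℚ) = 0 := by
      intro i hi
      rw [Nat.choose_eq_zero_of_lt (by omega : m - i < k)]
      simp
    rw [Finset.sum_congr rfl h0]
    rw [Nat.choose_eq_zero_of_lt (by omega : 2*m-k < m)]
    simp

/-- Closed form for the left-hand sum. -/
lemma Lclosed (m z k : ℕ) (hk : k ≤ 2*m) :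
    ∑ i ∈ Finset.range (m+1),
        genChooseQ ((m:ℚ)-z) i * genChooseQ ((m:ℚ)+z) (m-i) * (((i+z).choose k : ℕ) : ℚ)
      = (((2*m-k).choose m : ℕ) : ℚ) * genChooseQ ((m:ℚ)+z) k := by
  -- Step L1: rewrite each term
  have step1 : ∀ i ∈ Finset.range (m+1),
      genChooseQ ((m:ℚ)-z) i * genChooseQ ((m:ℚ)+z) (m-i) * (((i+z).choose k : ℕ) : ℚ)
        = ((((m+k)-i).choose k : ℕ) : ℚ) * genChooseQ ((m:ℚ)-z) i
            * genChooseQ ((m:ℚ)+z) ((m+k)-i) := by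
    intro i hi
    have hi' : i ≤ m := by have := Finset.mem_range.mp hi; omega
    have key := mul_shift ((m:ℚ)+z) (m-i) k
    have hc : ((m:ℚ)+z) - ((m-i : ℕ) : ℚ) = ((i+z : ℕ) : ℚ) := by push_cast [hi']; ring
    rw [hc, gcq_nat] at key
    have h1 : (m-i)+k = (m+k)-i := by omega
    rw [h1] at key
    have h2 : ((m+k)-i).choose (m-i) = ((m+k)-i).choose k := by
      rw [← Nat.choose_symm (by omega : k ≤ (m+k)-i)]
      congr 1
      omega
    rw [h2] at key
    linear_combination (genChooseQ ((m:ℚ)-z) i) * key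
  rw [Finset.sum_congr rfl step1]
  -- Step L2: extend range to m+k+1
  rw [Finset.sum_subset (Finset.range_subset_range.mpr (by omega : m+1 ≤ m+k+1))
      (by
        intro i hi hni
        simp only [Finset.mem_range] at hi hni
        rw [Nat.choose_eq_zero_of_lt (by omega : (m+k)-i < k)]
        simp)]
  -- Step L3: Newton expansion and swap
  have step3 : ∀ i ∈ Finset.range (m+k+1),
      ((((m+k)-i).choose k : ℕ) : ℚ) * genChooseQ ((m:ℚ)-z) i * genChooseQ ((m:ℚ)+z) ((m+k)-i)
        = ∑ j ∈ Finset.range (k+1),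
            (-1:ℚ)^j * (((m+k-j).choose (k-j) : ℕ) : ℚ) *
              ((i.choose j : ℕ) : ℚ) * genChooseQ ((m:ℚ)-z) i * genChooseQ ((m:ℚ)+z) ((m+k)-i) := by
    intro i hi
    have hi' : i ≤ m+k := by have := Finset.mem_range.mp hi; omega
    rw [newton k m i hi']
    rw [Finset.sum_mul, Finset.sum_mul]
  rw [Finset.sum_congr rfl step3, Finset.sum_comm]
  -- Step L4: inner Vandermonde
  have step4 : ∀ j ∈ Finset.range (k+1),
      ∑ i ∈ Finset.range (m+k+1),
          (-1:ℚ)^j * (((m+k-j).choose (k-j) : ℕ) : ℚ) *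
            ((i.choose j : ℕ) : ℚ) * genChooseQ ((m:ℚ)-z) i * genChooseQ ((m:ℚ)+z) ((m+k)-i)
        = (-1:ℚ)^j * (((m+k-j).choose (k-j) : ℕ) : ℚ) * genChooseQ ((m:ℚ)-z) j
            * (((2*m-j).choose ((m+k)-j) : ℕ) : ℚ) := by
    intro j hj
    have hj' : j ≤ k := by have := Finset.mem_range.mp hj; omega
    -- drop i < j
    rw [← Finset.sum_subset (by
          intro x hx
          simp only [Finset.mem_Ico, Finset.mem_range] at hx ⊢
          omega : Finset.Ico j (m+k+1) ⊆ Finset.range (m+k+1))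
        (by
          intro i hi hni
          simp only [Finset.mem_range, Finset.mem_Ico] at hi hni
          rw [Nat.choose_eq_zero_of_lt (by omega : i < j)]
          simp)]
    rw [Finset.sum_Ico_eq_sum_range]
    have hlen : m+k+1-j = ((m+k)-j)+1 := by omega
    rw [hlen]
    have inner : ∀ s ∈ Finset.range (((m+k)-j)+1),
        (-1:ℚ)^j * (((m+k-j).choose (k-j) : ℕ) : ℚ) *
            (((j+s).choose j : ℕ) : ℚ) * genChooseQ ((m:ℚ)-z) (j+s) * genChooseQ ((m:ℚ)+z) ((m+k)-(j+s))
          = ((-1:ℚ)^j * (((m+k-j).choose (k-j) : ℕ) : ℚ) * genChooseQ ((m:ℚ)-z) j)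
              * (genChooseQ ((m:ℚ)-z-j) s * genChooseQ ((m:ℚ)+z) (((m+k)-j)-s)) := by
      intro s hs
      have key := mul_shift ((m:ℚ)-z) j s
      have h2 : (m+k)-(j+s) = ((m+k)-j)-s := by omega
      rw [h2]
      linear_combination (-((-1:ℚ)^j * (((m+k-j).choose (k-j) : ℕ) : ℚ)
        * genChooseQ ((m:ℚ)+z) (m+k-j-s))) * key
    rw [Finset.sum_congr rfl inner, ← Finset.mul_sum]
    have hv := vandermonde ((m+k)-j) ((m:ℚ)-z-j) ((m:ℚ)+z)
    rw [hv]
    have harg : ((m:ℚ)-z-j) + ((m:ℚ)+z) = ((2*m-j : ℕ) : ℚ) := by push_cast [show j ≤ 2*m by omega]; ring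
    rw [harg, gcq_nat]
  rw [Finset.sum_congr rfl step4]
  -- Step L5: combine the two natural binomials
  have step5 : ∀ j ∈ Finset.range (k+1),
      (-1:ℚ)^j * (((m+k-j).choose (k-j) : ℕ) : ℚ) * genChooseQ ((m:ℚ)-z) j
          * (((2*m-j).choose ((m+k)-j) : ℕ) : ℚ)
        = (((2*m-k).choose m : ℕ) : ℚ) *
            ((-1:ℚ)^j * (((2*m-j).choose (k-j) : ℕ) : ℚ) * genChooseQ ((m:ℚ)-z) j) := by
    intro j hj
    have hj' : j ≤ k := by have := Finset.mem_range.mp hj; omega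
    have key := mul_shift (((2*m-j : ℕ)) : ℚ) (k-j) m
    have hc : (((2*m-j : ℕ)) : ℚ) - ((k-j : ℕ) : ℚ) = ((2*m-k : ℕ) : ℚ) := by
      push_cast [show j ≤ 2*m by omega, hj', show k ≤ 2*m from hk]; ring
    rw [hc, gcq_nat, gcq_nat, gcq_nat] at key
    have h1 : (k-j)+m = (m+k)-j := by omega
    rw [h1] at key
    have h2 : ((m+k)-j).choose (k-j) = (m+k-j).choose (k-j) := rfl
    linear_combination (-((-1:ℚ)^j * genChooseQ ((m:ℚ)-z) j)) * key
  rw [Finset.sum_congr rfl step5, ← Finset.mul_sum]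
  -- Step L6: reflection and final Vandermonde
  have step6 : ∀ j ∈ Finset.range (k+1),
      (-1:ℚ)^j * (((2*m-j).choose (k-j) : ℕ) : ℚ) * genChooseQ ((m:ℚ)-z) j
        = (-1:ℚ)^k * (genChooseQ ((m:ℚ)-z) j * genChooseQ ((k:ℚ)-2*m-1) (k-j)) := by
    intro j hj
    have hj' : j ≤ k := by have := Finset.mem_range.mp hj; omega
    have href := reflect ((k:ℚ)-2*m-1) (k-j)
    have harg : (((k-j):ℕ):ℚ) - 1 - ((k:ℚ)-2*m-1) = ((2*m-j : ℕ) : ℚ) := by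
      push_cast [hj', show j ≤ 2*m by omega]; ring
    rw [harg, gcq_nat] at href
    rw [href]
    have hpow : (-1:ℚ)^j * (-1:ℚ)^(k-j) = (-1:ℚ)^k := by
      rw [← pow_add]
      congr 1
      omega
    have hsq : (-1:ℚ)^(k-j) * (-1:ℚ)^(k-j) = 1 := by
      rw [← pow_add]
      exact Even.neg_one_pow ⟨k-j, by ring⟩
    linear_combination (genChooseQ ((m:ℚ)-z) j * (((2*m-j).choose (k-j) : ℕ) : ℚ) * (-1:ℚ)^(k-j)) * hpow
      - ((-1:ℚ)^j * (((2*m-j).choose (k-j) : ℕ) : ℚ) * genChooseQ ((m:ℚ)-z) j) * hsq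
  rw [Finset.sum_congr rfl step6, ← Finset.mul_sum]
  rw [vandermonde k ((m:ℚ)-z) ((k:ℚ)-2*m-1)]
  have href2 := reflect ((m:ℚ)+z) k
  have harg2 : (k:ℚ) - 1 - ((m:ℚ)+z) = ((m:ℚ)-z) + ((k:ℚ)-2*m-1) := by ring
  rw [harg2] at href2
  rw [← href2]


lemma star (m z k : ℕ) (hk : k ≤ 2*m) :
    ∑ i ∈ Finset.range (m+1),
        genChooseQ ((m:ℚ)-z) i * genChooseQ ((m:ℚ)+z) (m-i) * (((i+z).choose k : ℕ) : ℚ)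
      = ∑ i ∈ Finset.range (m+1),
        genChooseQ ((m:ℚ)-z) i * genChooseQ ((m:ℚ)+z) (m-i) * (((m-i).choose k : ℕ) : ℚ) := by
  rw [Lclosed m z k hk, Rclosed m z k hk]

end GCQ

open GCQ

noncomputable def phi : MvPolynomial (Fin 2) ℚ →+* Polynomial (Polynomial ℚ) :=
  (MvPolynomial.aeval (R := ℚ)
    (![Polynomial.X + Polynomial.C Polynomial.X,
      Polynomial.C Polynomial.X] : Fin 2 → Polynomial (Polynomial ℚ))).toRingHom

noncomputable def psi : Polynomial (Polynomial ℚ) →+* MvPolynomial (Fin 2) ℚ :=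
  Polynomial.eval₂RingHom
    (Polynomial.eval₂RingHom (MvPolynomial.C) (X 1)) (X 0 - X 1)

lemma psi_phi (p : MvPolynomial (Fin 2) ℚ) : psi (phi p) = p := by
  have h : psi.comp phi = RingHom.id _ := by
    apply MvPolynomial.ringHom_ext
    · intro r
      simp [phi, psi, MvPolynomial.aeval_C, Polynomial.algebraMap_apply]
    · intro i
      fin_cases i <;>
        simp [phi, psi, MvPolynomial.aeval_X, Matrix.cons_val_zero, Matrix.cons_val_one,
          Matrix.head_cons]
  calc psi (phi p) = (psi.comp phi) p := rfl
    _ = p := by rw [h]; rfl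

lemma psi_X : psi Polynomial.X = X 0 - X 1 := by
  simp [psi]

theorem stmt14 (m z : ℕ) :
    (X 0 - X 1) ^ (2 * m + 1) ∣
      ∑ i ∈ Finset.range (m + 1),
        MvPolynomial.C (genChooseQ ((m : ℚ) - z) i * genChooseQ ((m : ℚ) + z) (m - i)) *
          ((X 0 : MvPolynomial (Fin 2) ℚ) ^ (i + z) * X 1 ^ (m - i)
            - X 0 ^ (m - i) * X 1 ^ (i + z)) := by
  set P : MvPolynomial (Fin 2) ℚ :=
    ∑ i ∈ Finset.range (m + 1),
        MvPolynomial.C (genChooseQ ((m : ℚ) - z) i * genChooseQ ((m : ℚ) + z) (m - i)) *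
          ((X 0 : MvPolynomial (Fin 2) ℚ) ^ (i + z) * X 1 ^ (m - i)
            - X 0 ^ (m - i) * X 1 ^ (i + z)) with hP
  have hdvd : (Polynomial.X : Polynomial (Polynomial ℚ)) ^ (2*m+1) ∣ phi P := by
    rw [Polynomial.X_pow_dvd_iff]
    intro d hd
    have hd' : d ≤ 2*m := by omega
    -- compute the coefficient
    rw [hP, map_sum, Polynomial.finset_sum_coeff]
    have key : ∀ i ∈ Finset.range (m+1),
        (phi (MvPolynomial.C (genChooseQ ((m : ℚ) - z) i * genChooseQ ((m : ℚ) + z) (m - i)) *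
          ((X 0 : MvPolynomial (Fin 2) ℚ) ^ (i + z) * X 1 ^ (m - i)
            - X 0 ^ (m - i) * X 1 ^ (i + z)))).coeff d
          = Polynomial.C (genChooseQ ((m : ℚ) - z) i * genChooseQ ((m : ℚ) + z) (m - i)
              * ((((i+z).choose d : ℕ) : ℚ) - (((m-i).choose d : ℕ) : ℚ)))
            * Polynomial.X ^ ((m+z)-d) := by
      intro i hi
      have hi' : i ≤ m := by have := Finset.mem_range.mp hi; omega
      have hphi : phi (MvPolynomial.C (genChooseQ ((m : ℚ) - z) i * genChooseQ ((m : ℚ) + z) (m - i)) *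
          ((X 0 : MvPolynomial (Fin 2) ℚ) ^ (i + z) * X 1 ^ (m - i)
            - X 0 ^ (m - i) * X 1 ^ (i + z)))
          = Polynomial.C (Polynomial.C (genChooseQ ((m : ℚ) - z) i * genChooseQ ((m : ℚ) + z) (m - i))) *
            ((Polynomial.X + Polynomial.C Polynomial.X) ^ (i + z) * Polynomial.C (Polynomial.X ^ (m - i))
              - (Polynomial.X + Polynomial.C Polynomial.X) ^ (m - i) * Polynomial.C (Polynomial.X ^ (i + z))) := by
        simp [phi, MvPolynomial.aeval_X, Matrix.cons_val_zero, Matrix.cons_val_one, Matrix.head_cons,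
          Polynomial.algebraMap_apply, map_pow]
      rw [hphi, Polynomial.coeff_C_mul, Polynomial.coeff_sub,
        Polynomial.coeff_mul_C, Polynomial.coeff_mul_C,
        Polynomial.coeff_X_add_C_pow, Polynomial.coeff_X_add_C_pow]
      -- now pure Polynomial ℚ computation
      conv_rhs => rw [Polynomial.C_mul, mul_assoc]
      congr 1
      -- ⊢ X^{(i+z)-d}*↑C(i+z,d)*X^{m-i} - X^{(m-i)-d}*↑C(m-i,d)*X^{i+z} = C (Δ) * X^{(m+z)-d}
      have hcast : ∀ n j : ℕ, ((n.choose j : ℕ) : Polynomial ℚ) = Polynomial.C ((n.choose j : ℕ) : ℚ) := by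
        intro n j; simp
      rw [hcast, hcast, Polynomial.C_sub]
      have p1 : d ≤ i+z → (Polynomial.X : Polynomial ℚ)^((i+z)-d) * Polynomial.X^(m-i)
          = Polynomial.X^((m+z)-d) := by
        intro h
        rw [← pow_add]
        congr 1
        omega
      have p2 : d ≤ m-i → (Polynomial.X : Polynomial ℚ)^((m-i)-d) * Polynomial.X^(i+z)
          = Polynomial.X^((m+z)-d) := by
        intro h
        rw [← pow_add]
        congr 1
        omega
      rcases le_or_gt d (i+z) with h1 | h1 <;> rcases le_or_gt d (m-i) with h2 | h2
      · linear_combination (Polynomial.C ((((i+z).choose d : ℕ)) : ℚ)) * (p1 h1)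
          - (Polynomial.C ((((m-i).choose d : ℕ)) : ℚ)) * (p2 h2)
      · rw [Nat.choose_eq_zero_of_lt h2]
        simp only [Nat.cast_zero, Polynomial.C_0, sub_zero, zero_mul, mul_zero]
        linear_combination (Polynomial.C ((((i+z).choose d : ℕ)) : ℚ)) * (p1 h1)
      · rw [Nat.choose_eq_zero_of_lt h1]
        simp only [Nat.cast_zero, Polynomial.C_0, zero_sub, zero_mul, mul_zero, zero_mul]
        linear_combination (-(Polynomial.C ((((m-i).choose d : ℕ)) : ℚ))) * (p2 h2)
      · rw [Nat.choose_eq_zero_of_lt h1, Nat.choose_eq_zero_of_lt h2]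
        simp
    rw [Finset.sum_congr rfl key, ← Finset.sum_mul]
    have hzero : ∑ i ∈ Finset.range (m+1),
        Polynomial.C (genChooseQ ((m : ℚ) - z) i * genChooseQ ((m : ℚ) + z) (m - i)
          * ((((i+z).choose d : ℕ) : ℚ) - (((m-i).choose d : ℕ) : ℚ))) = 0 := by
      rw [← map_sum]
      have : ∑ i ∈ Finset.range (m+1),
          genChooseQ ((m : ℚ) - z) i * genChooseQ ((m : ℚ) + z) (m - i)
            * ((((i+z).choose d : ℕ) : ℚ) - (((m-i).choose d : ℕ) : ℚ)) = 0 := by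
        have hs := star m z d hd'
        rw [← sub_eq_zero] at hs
        rw [← hs, ← Finset.sum_sub_distrib]
        apply Finset.sum_congr rfl
        intro i _
        ring
      rw [this, map_zero]
    rw [hzero, zero_mul]
  obtain ⟨g, hg⟩ := hdvd
  refine ⟨psi g, ?_⟩
  calc P = psi (phi P) := (psi_phi P).symm
    _ = psi (Polynomial.X ^ (2*m+1) * g) := by rw [hg]
    _ = (X 0 - X 1) ^ (2*m+1) * psi g := by rw [map_mul, map_pow, psi_X]
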